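/- Let (N_k) be a sequence of nonnegative real numbers of the form N_k = Σ_{i=1}^r ρ_i λ_i^k with distinct nonzero complex λ_i, nonzero real ρ_i, and λ := max_i |λ_i| > 1. Then limsup_{k→∞} (log N_k)/k = log λ; in particular limsup N_k^{1/k} = λ. -/

import Mathlib

open Filter in
private lemma key_lemma' (r : ℕ) (lam : Fin r → ℂ) (ρ : Fin r → ℝ)
    (hlam_inj : Function.Injective lam)
    (N : ℕ → ℝ)
    (hN : ∀ k : ℕ, 1 ≤ k → (N k : ℂ) = ∑ i, (ρ i : ℂ) * lam i ^ k)
    (i0 : Fin r) (M : ℝ) (K : ℕ)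
    (hbound : ∀ k, K ≤ k → |N k| ≤ M ^ k) :
    ∃ B : ℝ, ∀ k, K ≤ k → 1 ≤ k → |ρ i0| * ‖lam i0‖ ^ k ≤ B * M ^ k := by
  classical
  set A : Matrix (Fin r) (Fin r) ℂ := (Matrix.vandermonde lam).transpose with hA
  have hdet : A.det ≠ 0 := by
    rw [Matrix.det_transpose, Matrix.det_vandermonde]
    apply Finset.prod_ne_zero_iff.2
    intro i _
    apply Finset.prod_ne_zero_iff.2
    intro j hj
    simp only [Finset.mem_Ioi] at hj
    exact sub_ne_zero.2 fun e => hj.ne' (hlam_inj e)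
  have hinv : A⁻¹ * A = 1 := Matrix.nonsing_inv_mul A (isUnit_iff_ne_zero.2 hdet)
  refine ⟨∑ j, ‖A⁻¹ i0 j‖ * M ^ (j : ℕ), ?_⟩
  intro k hK hk
  have hmv : A.mulVec (fun i => (ρ i : ℂ) * lam i ^ k) = fun j : Fin r => ((N (k + (j:ℕ)) : ℝ) : ℂ) := by
    funext j
    rw [hN (k + j) (le_add_right hk)]
    simp only [Matrix.mulVec, dotProduct, hA, Matrix.transpose_apply, Matrix.vandermonde]
    rw [Finset.sum_congr rfl]
    intro i _
    show lam i ^ (j:ℕ) * ((ρ i : ℂ) * lam i ^ k) = _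
    rw [pow_add]
    ring
  have hw : (fun i => (ρ i : ℂ) * lam i ^ k) = A⁻¹.mulVec (fun j : Fin r => ((N (k + (j:ℕ)) : ℝ) : ℂ)) := by
    rw [← hmv, Matrix.mulVec_mulVec, hinv, Matrix.one_mulVec]
  have h1 : (ρ i0 : ℂ) * lam i0 ^ k = ∑ j, A⁻¹ i0 j * ((N (k + (j:ℕ)) : ℝ) : ℂ) := by
    have := congrFun hw i0
    simpa [Matrix.mulVec, dotProduct] using this
  have h2 : |ρ i0| * ‖lam i0‖ ^ k = ‖(ρ i0 : ℂ) * lam i0 ^ k‖ := by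
    simp [norm_mul, norm_pow, Complex.norm_real]
  rw [h2, h1]
  calc ‖∑ j, A⁻¹ i0 j * ((N (k + (j:ℕ)) : ℝ) : ℂ)‖
      ≤ ∑ j, ‖A⁻¹ i0 j * ((N (k + (j:ℕ)) : ℝ) : ℂ)‖ := norm_sum_le _ _
    _ ≤ ∑ j : Fin r, ‖A⁻¹ i0 j‖ * M ^ ((j:ℕ)) * M ^ k := by
        apply Finset.sum_le_sum
        intro j _
        rw [norm_mul, Complex.norm_real, Real.norm_eq_abs, mul_assoc, ← pow_add]
        apply mul_le_mul_of_nonneg_left _ (norm_nonneg _)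
        rw [add_comm k (j:ℕ)] at *
        exact hbound _ (le_add_left hK) |>.trans_eq rfl
    _ = (∑ j, ‖A⁻¹ i0 j‖ * M ^ (j:ℕ)) * M ^ k := by rw [Finset.sum_mul]

theorem exp_sum_growth_rate (r : ℕ) (lam : Fin r → ℂ) (ρ : Fin r → ℝ)
    (hlam_inj : Function.Injective lam) (hlam_ne : ∀ i, lam i ≠ 0)
    (hρ_ne : ∀ i, ρ i ≠ 0)
    (N : ℕ → ℝ) (hN_nonneg : ∀ k : ℕ, 1 ≤ k → 0 ≤ N k)
    (hN : ∀ k : ℕ, 1 ≤ k → (N k : ℂ) = ∑ i, (ρ i : ℂ) * lam i ^ k)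
    (L : ℝ) (hL_max : ∀ i, ‖lam i‖ ≤ L) (hL_mem : ∃ i, ‖lam i‖ = L)
    (hL : 1 < L) :
    Filter.limsup (fun k : ℕ => Real.log (N k) / k) Filter.atTop = Real.log L ∧
    Filter.limsup (fun k : ℕ => (N k) ^ ((1 : ℝ) / k)) Filter.atTop = L := by
  obtain ⟨i0, hi0⟩ := hL_mem
  have hL0 : (0:ℝ) < L := lt_trans one_pos hL
  set C : ℝ := max (∑ i, |ρ i|) 1 with hC
  have hC1 : (1:ℝ) ≤ C := le_max_right _ _
  have hC0 : (0:ℝ) < C := lt_of_lt_of_le one_pos hC1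
  -- upper bound N k ≤ C * L ^ k
  have hupper : ∀ k : ℕ, 1 ≤ k → N k ≤ C * L ^ k := by
    intro k hk
    calc N k ≤ |N k| := le_abs_self _
      _ = ‖(N k : ℂ)‖ := by rw [Complex.norm_real, Real.norm_eq_abs]
      _ = ‖∑ i, (ρ i:ℂ) * lam i ^ k‖ := by rw [hN k hk]
      _ ≤ ∑ i, ‖(ρ i:ℂ) * lam i ^ k‖ := norm_sum_le _ _
      _ ≤ ∑ i, |ρ i| * L ^ k := by
          apply Finset.sum_le_sum; intro i _
          rw [norm_mul, norm_pow, Complex.norm_real, Real.norm_eq_abs]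
          exact mul_le_mul_of_nonneg_left
            (pow_le_pow_left₀ (norm_nonneg _) (hL_max i) k) (abs_nonneg _)
      _ = (∑ i, |ρ i|) * L ^ k := (Finset.sum_mul _ _ _).symm
      _ ≤ C * L ^ k := mul_le_mul_of_nonneg_right (le_max_left _ _) (pow_nonneg hL0.le k)
  -- frequently lower bound
  have hfreq : ∀ M : ℝ, 1 < M → M < L → ∃ᶠ k in Filter.atTop, 1 ≤ k ∧ M ^ k ≤ N k := by
    intro M hM1 hML
    have hM0 : (0:ℝ) < M := lt_trans one_pos hM1
    by_contra hcon
    rw [Filter.not_frequently] at hcon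
    rw [Filter.eventually_atTop] at hcon
    obtain ⟨K, hK⟩ := hcon
    have hbound : ∀ k, max K 1 ≤ k → |N k| ≤ M ^ k := by
      intro k hk
      have hk1 : 1 ≤ k := le_trans (le_max_right K 1) hk
      have h := hK k (le_trans (le_max_left K 1) hk)
      push_neg at h
      rw [abs_of_nonneg (hN_nonneg k hk1)]
      exact (h hk1).le
    obtain ⟨B, hB⟩ := key_lemma' r lam ρ hlam_inj N hN i0 M (max K 1) hbound
    have hρ0 : (0:ℝ) < |ρ i0| := abs_pos.2 (hρ_ne i0)
    have hgt : ∀ k, max K 1 ≤ k → (L / M) ^ k ≤ B / |ρ i0| := by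
      intro k hk
      have h := hB k hk (le_trans (le_max_right K 1) hk)
      rw [hi0] at h
      rw [div_pow, div_le_div_iff₀ (pow_pos hM0 k) hρ0]
      nlinarith [pow_pos hM0 k, pow_pos hL0 k]
    have htend : Filter.Tendsto (fun k : ℕ => (L/M)^k) Filter.atTop Filter.atTop :=
      tendsto_pow_atTop_atTop_of_one_lt ((one_lt_div hM0).2 hML)
    have h1 : ∀ᶠ k in Filter.atTop, B / |ρ i0| + 1 ≤ (L/M)^k :=
      htend.eventually_ge_atTop _
    have h2 : ∀ᶠ k in Filter.atTop, max K 1 ≤ k := Filter.eventually_ge_atTop _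
    obtain ⟨k, hk1, hk2⟩ := (h1.and h2).exists
    linarith [hgt k hk2]
  have hM0def : (1:ℝ) < (1+L)/2 := by linarith
  have hM0L : (1+L)/2 < L := by linarith
  -- Part 1
  have hfub : ∀ ε : ℝ, 0 < ε → ∀ᶠ k in Filter.atTop, Real.log (N k) / k ≤ Real.log L + ε := by
    intro ε hε
    have h1 : Filter.Tendsto (fun k : ℕ => Real.log C / k) Filter.atTop (nhds 0) :=
      tendsto_const_div_atTop_nhds_zero_nat _
    filter_upwards [h1.eventually_lt_const hε, Filter.eventually_ge_atTop 1] with k hkC hk1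
    have hk0 : (0:ℝ) < k := by exact_mod_cast hk1
    rcases eq_or_lt_of_le (hN_nonneg k hk1) with h0 | h0
    · rw [← h0, Real.log_zero, zero_div]
      have := Real.log_pos hL
      linarith
    · have hlog : Real.log (N k) ≤ Real.log C + k * Real.log L := by
        calc Real.log (N k) ≤ Real.log (C * L ^ k) :=
              Real.log_le_log h0 (hupper k hk1)
          _ = Real.log C + k * Real.log L := by
              rw [Real.log_mul (ne_of_gt hC0) (ne_of_gt (pow_pos hL0 k)), Real.log_pow]
      rw [div_le_iff₀ hk0]
      have : Real.log C / k * k = Real.log C := div_mul_cancel₀ _ (ne_of_gt hk0)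
      nlinarith
  have hbddf : Filter.IsBoundedUnder (· ≤ ·) Filter.atTop
      (fun k : ℕ => Real.log (N k) / k) :=
    ⟨Real.log L + 1, Filter.eventually_map.2 (hfub 1 one_pos)⟩
  have hfreqc : ∀ M : ℝ, 1 < M → M < L →
      ∃ᶠ k in Filter.atTop, Real.log M ≤ Real.log (N k) / k := by
    intro M hM1 hML
    refine (hfreq M hM1 hML).mono ?_
    rintro k ⟨hk1, hkN⟩
    have hk0 : (0:ℝ) < k := by exact_mod_cast hk1
    have hM0 : (0:ℝ) < M := lt_trans one_pos hM1
    have h2 : (k:ℝ) * Real.log M ≤ Real.log (N k) := by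
      rw [← Real.log_pow]
      exact Real.log_le_log (pow_pos hM0 k) hkN
    rw [le_div_iff₀ hk0]
    nlinarith
  have hcof : Filter.IsCoboundedUnder (· ≤ ·) Filter.atTop
      (fun k : ℕ => Real.log (N k) / k) :=
    Filter.IsCoboundedUnder.of_frequently_ge (hfreqc _ hM0def hM0L)
  have part1 : Filter.limsup (fun k : ℕ => Real.log (N k) / k) Filter.atTop = Real.log L := by
    apply le_antisymm
    · apply le_of_forall_pos_le_add
      intro ε hε
      exact Filter.limsup_le_of_le hcof (hfub ε hε)
    · apply le_of_forall_pos_le_add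
      intro ε hε
      have hexp : Real.exp (Real.log L - ε) < L := by
        have h := Real.exp_lt_exp.2 (show Real.log L - ε < Real.log L by linarith)
        rwa [Real.exp_log hL0] at h
      set M := max (Real.exp (Real.log L - ε)) ((1+L)/2) with hMdef
      have hM1 : 1 < M := lt_of_lt_of_le hM0def (le_max_right _ _)
      have hML : M < L := max_lt hexp hM0L
      have hlogM : Real.log L - ε ≤ Real.log M := by
        rw [← Real.log_exp (Real.log L - ε)]
        exact Real.log_le_log (Real.exp_pos _) (le_max_left _ _)
      have := Filter.le_limsup_of_frequently_le (hfreqc M hM1 hML) hbddf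
      linarith
  -- Part 2
  have hrpowLk : ∀ k : ℕ, 1 ≤ k → (L ^ k : ℝ) ^ ((1:ℝ)/k) = L := by
    intro k hk
    have hk0 : (k:ℝ) ≠ 0 := by positivity
    rw [← Real.rpow_natCast L k, ← Real.rpow_mul hL0.le, mul_one_div_cancel hk0, Real.rpow_one]
  have hgub : ∀ ε : ℝ, 0 < ε → ∀ᶠ k in Filter.atTop, (N k) ^ ((1:ℝ)/k) ≤ L + ε := by
    intro ε hε
    have htend : Filter.Tendsto (fun k : ℕ => C ^ ((1:ℝ)/k) * L) Filter.atTop (nhds L) := by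
      have h1 : Filter.Tendsto (fun k : ℕ => (1:ℝ)/k * Real.log C) Filter.atTop (nhds 0) := by
        simpa using tendsto_one_div_atTop_nhds_zero_nat.mul_const (Real.log C)
      have h2 : Filter.Tendsto (fun k : ℕ => Real.exp ((1:ℝ)/k * Real.log C))
          Filter.atTop (nhds 1) := by
        have := (Real.continuous_exp.continuousAt (x := 0)).tendsto.comp h1
        simpa [Real.exp_zero, Function.comp_def] using this
      have h3 : (fun k : ℕ => Real.exp ((1:ℝ)/k * Real.log C))
          = fun k : ℕ => C ^ ((1:ℝ)/k) := by
        funext k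
        rw [Real.rpow_def_of_pos hC0, mul_comm]
      rw [h3] at h2
      simpa using h2.mul_const L
    filter_upwards [htend.eventually_lt_const (by linarith : L < L + ε),
      Filter.eventually_ge_atTop 1] with k hkC hk1
    have hstep : (N k) ^ ((1:ℝ)/k) ≤ C ^ ((1:ℝ)/k) * L := by
      calc (N k) ^ ((1:ℝ)/k) ≤ (C * L ^ k) ^ ((1:ℝ)/k) :=
            Real.rpow_le_rpow (hN_nonneg k hk1) (hupper k hk1) (by positivity)
        _ = C ^ ((1:ℝ)/k) * (L ^ k : ℝ) ^ ((1:ℝ)/k) :=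
            Real.mul_rpow hC0.le (pow_nonneg hL0.le k)
        _ = C ^ ((1:ℝ)/k) * L := by rw [hrpowLk k hk1]
    linarith
  have hbddg : Filter.IsBoundedUnder (· ≤ ·) Filter.atTop
      (fun k : ℕ => (N k) ^ ((1:ℝ)/k)) :=
    ⟨L + 1, Filter.eventually_map.2 (hgub 1 one_pos)⟩
  have hgfreq : ∀ M : ℝ, 1 < M → M < L →
      ∃ᶠ k in Filter.atTop, M ≤ (N k) ^ ((1:ℝ)/k) := by
    intro M hM1 hML
    refine (hfreq M hM1 hML).mono ?_
    rintro k ⟨hk1, hkN⟩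
    have hM0 : (0:ℝ) < M := lt_trans one_pos hM1
    have hk0 : (k:ℝ) ≠ 0 := by positivity
    calc M = (M ^ k : ℝ) ^ ((1:ℝ)/k) := by
          rw [← Real.rpow_natCast M k, ← Real.rpow_mul hM0.le, mul_one_div_cancel hk0,
            Real.rpow_one]
      _ ≤ (N k) ^ ((1:ℝ)/k) :=
          Real.rpow_le_rpow (pow_nonneg hM0.le k) hkN (by positivity)
  have hcog : Filter.IsCoboundedUnder (· ≤ ·) Filter.atTop
      (fun k : ℕ => (N k) ^ ((1:ℝ)/k)) :=
    Filter.IsCoboundedUnder.of_frequently_ge (hgfreq _ hM0def hM0L)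
  refine ⟨part1, le_antisymm ?_ ?_⟩
  · apply le_of_forall_pos_le_add
    intro ε hε
    exact Filter.limsup_le_of_le hcog (hgub ε hε)
  · apply le_of_forall_pos_le_add
    intro ε hε
    set M := max (L - ε) ((1+L)/2) with hMdef
    have hM1 : 1 < M := lt_of_lt_of_le hM0def (le_max_right _ _)
    have hML : M < L := max_lt (by linarith) hM0L
    have := Filter.le_limsup_of_frequently_le (hgfreq M hM1 hML) hbddg
    have hLM : L - ε ≤ M := le_max_left _ _
    linarith
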